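/- (Uniqueness of categorified idempotents) Let 𝒞 be a monoidal preadditive category for which ℤ-indexed cochain complexes over 𝒞 carry the induced monoidal structure. Let ι : 𝟙 ⟶ P and ι' : 𝟙 ⟶ P' be chain maps from the unit complex such that P' ⊗ Cone(ι) is contractible and Cone(ι') ⊗ P is contractible. Then P and P' are homotopy equivalent. -/

import Mathlib

open CategoryTheory CategoryTheory.Limits MonoidalCategory CochainComplex HomologicalComplex

namespace CategorifiedIdemAux

open CategoryTheory.Pretriangulated

set_option linter.unusedSectionVars false

variable {C : Type*} [Category C] [MonoidalCategory C] [Preadditive C] [HasZeroObject C]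
    [HasBinaryBiproducts C]
    [(curriedTensor C).Additive] [∀ (X₁ : C), ((curriedTensor C).obj X₁).Additive]
    [∀ (X₁ X₂ : GradedObject ℤ C), GradedObject.HasTensor X₁ X₂]
    [∀ X₁, PreservesColimit (Functor.empty.{0} C) ((curriedTensor C).obj X₁)]
    [∀ X₂, PreservesColimit (Functor.empty.{0} C) ((curriedTensor C).flip.obj X₂)]
    [∀ (X₁ X₂ X₃ X₄ : GradedObject ℤ C), GradedObject.HasTensor₄ObjExt X₁ X₂ X₃ X₄]
    [∀ (X₁ X₂ X₃ : GradedObject ℤ C), GradedObject.HasGoodTensor₁₂Tensor X₁ X₂ X₃]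
    [∀ (X₁ X₂ X₃ : GradedObject ℤ C), GradedObject.HasGoodTensorTensor₂₃ X₁ X₂ X₃]

lemma whiskerRight_def {A B : CochainComplex C ℤ} (f : A ⟶ B) (Q : CochainComplex C ℤ) :
    f ▷ Q = HomologicalComplex.mapBifunctorMap f (𝟙 Q) (curriedTensor C) (ComplexShape.up ℤ) :=
  rfl

lemma whiskerLeft_def {A B : CochainComplex C ℤ} (Q : CochainComplex C ℤ) (f : A ⟶ B) :
    Q ◁ f = HomologicalComplex.mapBifunctorMap (𝟙 Q) f (curriedTensor C) (ComplexShape.up ℤ) :=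
  rfl

lemma tensorObj_def (A Q : CochainComplex C ℤ) :
    A ⊗ Q = HomologicalComplex.mapBifunctor A Q (curriedTensor C) (ComplexShape.up ℤ) :=
  rfl

lemma add_whiskerRight' {X Y : C} (f g : X ⟶ Y) (Z : C) :
    (f + g) ▷ Z = f ▷ Z + g ▷ Z :=
  calc (f + g) ▷ Z = ((curriedTensor C).map (f + g)).app Z := rfl
    _ = ((curriedTensor C).map f + (curriedTensor C).map g).app Z := by
        rw [Functor.map_add]
    _ = f ▷ Z + g ▷ Z := rfl

noncomputable def triMor₃ {A B : CochainComplex C ℤ} (φ : A ⟶ B) :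
    mappingCone φ ⟶ A⟦(1 : ℤ)⟧ := (mappingCone.triangle φ).mor₃

lemma mor₃_f {A B : CochainComplex C ℤ} (φ : A ⟶ B) (p : ℤ) :
    (triMor₃ φ).f p =
      -((mappingCone.fst φ).1.v p (p + 1) rfl ≫ (A.shiftFunctorObjXIso 1 p (p + 1) rfl).inv) := by
  apply mappingCone.ext_from φ (p + 1) p rfl
  · erw [mappingCone.inl_v_triangle_mor₃_f]
    simp only [shiftFunctorObjXIso, HomologicalComplex.XIsoOfEq_rfl, Iso.refl_inv]
    erw [Category.comp_id, Preadditive.comp_neg, mappingCone.inl_v_fst_v]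
  · erw [mappingCone.inr_f_triangle_mor₃_f]
    simp only [shiftFunctorObjXIso, HomologicalComplex.XIsoOfEq_rfl, Iso.refl_inv]
    erw [Category.comp_id, Preadditive.comp_neg, mappingCone.inr_f_fst_v, neg_zero]
    rfl


lemma neg_whiskerRight' {X Y : C} (f : X ⟶ Y) (Z : C) :
    (-f) ▷ Z = -(f ▷ Z) :=
  calc (-f) ▷ Z = ((curriedTensor C).map (-f)).app Z := rfl
    _ = (-(curriedTensor C).map f).app Z := by rw [Functor.map_neg]
    _ = -(f ▷ Z) := rfl

lemma whiskerLeft_add' (Z : C) {X Y : C} (f g : X ⟶ Y) :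
    Z ◁ (f + g) = Z ◁ f + Z ◁ g :=
  calc Z ◁ (f + g) = ((curriedTensor C).obj Z).map (f + g) := rfl
    _ = ((curriedTensor C).obj Z).map f + ((curriedTensor C).obj Z).map g := by
        rw [Functor.map_add]
    _ = Z ◁ f + Z ◁ g := rfl

lemma whiskerLeft_zero₀ (Z : C) {X Y : C} :
    Z ◁ (0 : X ⟶ Y) = 0 :=
  calc Z ◁ (0 : X ⟶ Y) = ((curriedTensor C).obj Z).map 0 := rfl
    _ = 0 := by rw [Functor.map_zero]

lemma zero_whiskerRight₀ {X Y : C} (Z : C) :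
    (0 : X ⟶ Y) ▷ Z = 0 :=
  calc (0 : X ⟶ Y) ▷ Z = ((curriedTensor C).map (0 : X ⟶ Y)).app Z := rfl
    _ = (0 : (curriedTensor C).obj X ⟶ (curriedTensor C).obj Y).app Z := by
        rw [Functor.map_zero]
    _ = 0 := rfl

lemma whiskerLeft_neg' (Z : C) {X Y : C} (f : X ⟶ Y) :
    Z ◁ (-f) = -(Z ◁ f) :=
  calc Z ◁ (-f) = ((curriedTensor C).obj Z).map (-f) := rfl
    _ = -((curriedTensor C).obj Z).map f := by rw [Functor.map_neg]
    _ = -(Z ◁ f) := rfl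

lemma zero_whiskerRight' {A B Q : CochainComplex C ℤ} :
    (0 : A ⟶ B) ▷ Q = 0 := by
  rw [whiskerRight_def]
  apply HomologicalComplex.hom_ext
  intro n
  apply HomologicalComplex.mapBifunctor.hom_ext
  intro p q hpq
  simp [zero_whiskerRight₀, whiskerLeft_zero₀]

lemma whiskerLeft_zero' {A B Q : CochainComplex C ℤ} :
    Q ◁ (0 : A ⟶ B) = 0 := by
  rw [whiskerLeft_def]
  apply HomologicalComplex.hom_ext
  intro n
  apply HomologicalComplex.mapBifunctor.hom_ext
  intro p q hpq
  simp [zero_whiskerRight₀, whiskerLeft_zero₀]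

/-- The degreewise split short exact sequence `B ⊗ Q ⟶ Cone(φ) ⊗ Q ⟶ A⟦1⟧ ⊗ Q`. -/
noncomputable def shortComplex₁ (Q : CochainComplex C ℤ) {A B : CochainComplex C ℤ}
    (φ : A ⟶ B) : ShortComplex (CochainComplex C ℤ) :=
  ShortComplex.mk (mappingCone.inr φ ▷ Q) (triMor₃ φ ▷ Q) (by
    erw [← comp_whiskerRight, mappingCone.inr_triangleδ, zero_whiskerRight'])

noncomputable def splitting₁ (Q : CochainComplex C ℤ) {A B : CochainComplex C ℤ}
    (φ : A ⟶ B) (n : ℤ) :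
    ((shortComplex₁ Q φ).map (HomologicalComplex.eval C (ComplexShape.up ℤ) n)).Splitting where
  r := mapBifunctorDesc (fun p q hpq =>
    ((mappingCone.snd φ).v p p (add_zero p) ▷ Q.X q) ≫
      ιMapBifunctor B Q (curriedTensor C) (ComplexShape.up ℤ) p q n hpq)
  s := mapBifunctorDesc (fun p q hpq =>
    (-((((A.shiftFunctorObjXIso 1 p (p + 1) rfl).hom ≫
        (mappingCone.inl φ).v (p + 1) p (by omega))) ▷ Q.X q)) ≫
      ιMapBifunctor (mappingCone φ) Q (curriedTensor C) (ComplexShape.up ℤ) p q n hpq)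
  f_r := by
    apply HomologicalComplex.mapBifunctor.hom_ext
    intro p q hpq
    delta shortComplex₁ ShortComplex.map HomologicalComplex.eval
    dsimp only
    simp only [whiskerRight_def]
    simp only [HomologicalComplex.ι_mapBifunctorMap_assoc, HomologicalComplex.ι_mapBifunctorMap,
      HomologicalComplex.ι_mapBifunctorDesc, HomologicalComplex.ι_mapBifunctorDesc_assoc,
      curriedTensor_map_app, curriedTensor_obj_obj, curriedTensor_obj_map,
      HomologicalComplex.id_f, Functor.map_id, MonoidalCategory.whiskerLeft_id,
      MonoidalCategory.id_whiskerRight, Category.id_comp, Category.comp_id, Category.assoc,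
      Preadditive.comp_add, Preadditive.add_comp, Preadditive.neg_comp, Preadditive.comp_neg,
      mor₃_f, neg_whiskerRight', whiskerLeft_neg', neg_neg, Iso.hom_inv_id, Iso.inv_hom_id,
      Iso.hom_inv_id_assoc, Iso.inv_hom_id_assoc, mappingCone.inr_f_snd_v,
      mappingCone.inl_v_fst_v, mappingCone.inl_v_fst_v_assoc,
      shiftFunctorObjXIso, HomologicalComplex.XIsoOfEq_rfl, Iso.refl_inv, Iso.refl_hom,
      ← MonoidalCategory.comp_whiskerRight_assoc, ← MonoidalCategory.whiskerLeft_comp_assoc]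
    try rw [MonoidalCategory.id_whiskerRight, Category.id_comp]
    try rw [MonoidalCategory.whiskerLeft_id, Category.id_comp]
    try exact (Category.comp_id _).symm
  s_g := by
    apply HomologicalComplex.mapBifunctor.hom_ext
    intro p q hpq
    delta shortComplex₁ ShortComplex.map HomologicalComplex.eval
    dsimp only
    simp only [whiskerRight_def]
    simp only [HomologicalComplex.ι_mapBifunctorMap_assoc, HomologicalComplex.ι_mapBifunctorMap,
      HomologicalComplex.ι_mapBifunctorDesc, HomologicalComplex.ι_mapBifunctorDesc_assoc,
      curriedTensor_map_app, curriedTensor_obj_obj, curriedTensor_obj_map,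
      HomologicalComplex.id_f, Functor.map_id, MonoidalCategory.whiskerLeft_id,
      MonoidalCategory.id_whiskerRight, Category.id_comp, Category.comp_id, Category.assoc,
      Preadditive.comp_add, Preadditive.add_comp, Preadditive.neg_comp, Preadditive.comp_neg,
      mor₃_f, neg_whiskerRight', whiskerLeft_neg', neg_neg, Iso.hom_inv_id, Iso.inv_hom_id,
      Iso.hom_inv_id_assoc, Iso.inv_hom_id_assoc, mappingCone.inr_f_snd_v,
      mappingCone.inl_v_fst_v, mappingCone.inl_v_fst_v_assoc,
      shiftFunctorObjXIso, HomologicalComplex.XIsoOfEq_rfl, Iso.refl_inv, Iso.refl_hom,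
      ← MonoidalCategory.comp_whiskerRight_assoc, ← MonoidalCategory.whiskerLeft_comp_assoc]
    try rw [MonoidalCategory.id_whiskerRight, Category.id_comp]
    try rw [MonoidalCategory.whiskerLeft_id, Category.id_comp]
    try exact (Category.comp_id _).symm
    erw [Category.id_comp, Category.comp_id, mappingCone.inl_v_fst_v]
    erw [MonoidalCategory.id_whiskerRight, Category.id_comp, Category.comp_id]
  id := by
    apply HomologicalComplex.mapBifunctor.hom_ext
    intro p q hpq
    delta shortComplex₁ ShortComplex.map HomologicalComplex.eval
    dsimp only
    simp only [whiskerRight_def]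
    simp only [HomologicalComplex.ι_mapBifunctorMap_assoc, HomologicalComplex.ι_mapBifunctorMap,
      HomologicalComplex.ι_mapBifunctorDesc, HomologicalComplex.ι_mapBifunctorDesc_assoc,
      curriedTensor_map_app, curriedTensor_obj_obj, curriedTensor_obj_map,
      HomologicalComplex.id_f, Functor.map_id, MonoidalCategory.whiskerLeft_id,
      MonoidalCategory.id_whiskerRight, Category.id_comp, Category.comp_id, Category.assoc,
      Preadditive.comp_add, Preadditive.add_comp, Preadditive.neg_comp, Preadditive.comp_neg,
      mor₃_f, neg_whiskerRight', whiskerLeft_neg', neg_neg, Iso.hom_inv_id, Iso.inv_hom_id,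
      Iso.hom_inv_id_assoc, Iso.inv_hom_id_assoc, mappingCone.inr_f_snd_v,
      mappingCone.inl_v_fst_v, mappingCone.inl_v_fst_v_assoc,
      shiftFunctorObjXIso, HomologicalComplex.XIsoOfEq_rfl, Iso.refl_inv, Iso.refl_hom,
      ← MonoidalCategory.comp_whiskerRight_assoc, ← MonoidalCategory.whiskerLeft_comp_assoc]
    try rw [MonoidalCategory.id_whiskerRight, Category.id_comp]
    try rw [MonoidalCategory.whiskerLeft_id, Category.id_comp]
    rw [← Preadditive.add_comp, ← add_whiskerRight']
    erw [Category.comp_id, Category.id_comp]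
    erw [show (mappingCone.snd φ).v p p (add_zero p) ≫ (mappingCone.inr φ).f p +
        (mappingCone.fst φ).1.v p (p + 1) rfl ≫ (mappingCone.inl φ).v (p + 1) p (by omega) =
        𝟙 ((mappingCone φ).X p) from by
      rw [add_comm]; exact mappingCone.id_X φ p (p + 1) rfl]
    rw [MonoidalCategory.id_whiskerRight, Category.id_comp]
    exact (Category.comp_id _).symm

/-- The degreewise split short exact sequence `Q ⊗ B ⟶ Q ⊗ Cone(φ) ⟶ Q ⊗ A⟦1⟧`. -/
noncomputable def shortComplex₂ (Q : CochainComplex C ℤ) {A B : CochainComplex C ℤ}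
    (φ : A ⟶ B) : ShortComplex (CochainComplex C ℤ) :=
  ShortComplex.mk (Q ◁ mappingCone.inr φ) (Q ◁ triMor₃ φ) (by
    erw [← MonoidalCategory.whiskerLeft_comp, mappingCone.inr_triangleδ, whiskerLeft_zero'])

noncomputable def splitting₂ (Q : CochainComplex C ℤ) {A B : CochainComplex C ℤ}
    (φ : A ⟶ B) (n : ℤ) :
    ((shortComplex₂ Q φ).map (HomologicalComplex.eval C (ComplexShape.up ℤ) n)).Splitting where
  r := mapBifunctorDesc (fun p q hpq =>
    (Q.X p ◁ (mappingCone.snd φ).v q q (add_zero q)) ≫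
      ιMapBifunctor Q B (curriedTensor C) (ComplexShape.up ℤ) p q n hpq)
  s := mapBifunctorDesc (fun p q hpq =>
    (-(Q.X p ◁ (((A.shiftFunctorObjXIso 1 q (q + 1) rfl).hom ≫
        (mappingCone.inl φ).v (q + 1) q (by omega))))) ≫
      ιMapBifunctor Q (mappingCone φ) (curriedTensor C) (ComplexShape.up ℤ) p q n hpq)
  f_r := by
    apply HomologicalComplex.mapBifunctor.hom_ext
    intro p q hpq
    delta shortComplex₂ ShortComplex.map HomologicalComplex.eval
    dsimp only
    simp only [whiskerLeft_def]
    simp only [HomologicalComplex.ι_mapBifunctorMap_assoc, HomologicalComplex.ι_mapBifunctorMap,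
      HomologicalComplex.ι_mapBifunctorDesc, HomologicalComplex.ι_mapBifunctorDesc_assoc,
      curriedTensor_map_app, curriedTensor_obj_obj, curriedTensor_obj_map,
      HomologicalComplex.id_f, Functor.map_id, MonoidalCategory.whiskerLeft_id,
      MonoidalCategory.id_whiskerRight, Category.id_comp, Category.comp_id, Category.assoc,
      Preadditive.comp_add, Preadditive.add_comp, Preadditive.neg_comp, Preadditive.comp_neg,
      mor₃_f, neg_whiskerRight', whiskerLeft_neg', neg_neg, Iso.hom_inv_id, Iso.inv_hom_id,
      Iso.hom_inv_id_assoc, Iso.inv_hom_id_assoc, mappingCone.inr_f_snd_v,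
      mappingCone.inl_v_fst_v, mappingCone.inl_v_fst_v_assoc,
      shiftFunctorObjXIso, HomologicalComplex.XIsoOfEq_rfl, Iso.refl_inv, Iso.refl_hom,
      ← MonoidalCategory.comp_whiskerRight_assoc, ← MonoidalCategory.whiskerLeft_comp_assoc]
    try rw [MonoidalCategory.id_whiskerRight, Category.id_comp]
    try rw [MonoidalCategory.whiskerLeft_id, Category.id_comp]
    try exact (Category.comp_id _).symm
  s_g := by
    apply HomologicalComplex.mapBifunctor.hom_ext
    intro p q hpq
    delta shortComplex₂ ShortComplex.map HomologicalComplex.eval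
    dsimp only
    simp only [whiskerLeft_def]
    simp only [HomologicalComplex.ι_mapBifunctorMap_assoc, HomologicalComplex.ι_mapBifunctorMap,
      HomologicalComplex.ι_mapBifunctorDesc, HomologicalComplex.ι_mapBifunctorDesc_assoc,
      curriedTensor_map_app, curriedTensor_obj_obj, curriedTensor_obj_map,
      HomologicalComplex.id_f, Functor.map_id, MonoidalCategory.whiskerLeft_id,
      MonoidalCategory.id_whiskerRight, Category.id_comp, Category.comp_id, Category.assoc,
      Preadditive.comp_add, Preadditive.add_comp, Preadditive.neg_comp, Preadditive.comp_neg,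
      mor₃_f, neg_whiskerRight', whiskerLeft_neg', neg_neg, Iso.hom_inv_id, Iso.inv_hom_id,
      Iso.hom_inv_id_assoc, Iso.inv_hom_id_assoc, mappingCone.inr_f_snd_v,
      mappingCone.inl_v_fst_v, mappingCone.inl_v_fst_v_assoc,
      shiftFunctorObjXIso, HomologicalComplex.XIsoOfEq_rfl, Iso.refl_inv, Iso.refl_hom,
      ← MonoidalCategory.comp_whiskerRight_assoc, ← MonoidalCategory.whiskerLeft_comp_assoc]
    try rw [MonoidalCategory.id_whiskerRight, Category.id_comp]
    try rw [MonoidalCategory.whiskerLeft_id, Category.id_comp]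
    try exact (Category.comp_id _).symm
    erw [Category.id_comp, Category.comp_id, mappingCone.inl_v_fst_v]
    erw [MonoidalCategory.whiskerLeft_id, Category.id_comp, Category.comp_id]
  id := by
    apply HomologicalComplex.mapBifunctor.hom_ext
    intro p q hpq
    delta shortComplex₂ ShortComplex.map HomologicalComplex.eval
    dsimp only
    simp only [whiskerLeft_def]
    simp only [HomologicalComplex.ι_mapBifunctorMap_assoc, HomologicalComplex.ι_mapBifunctorMap,
      HomologicalComplex.ι_mapBifunctorDesc, HomologicalComplex.ι_mapBifunctorDesc_assoc,
      curriedTensor_map_app, curriedTensor_obj_obj, curriedTensor_obj_map,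
      HomologicalComplex.id_f, Functor.map_id, MonoidalCategory.whiskerLeft_id,
      MonoidalCategory.id_whiskerRight, Category.id_comp, Category.comp_id, Category.assoc,
      Preadditive.comp_add, Preadditive.add_comp, Preadditive.neg_comp, Preadditive.comp_neg,
      mor₃_f, neg_whiskerRight', whiskerLeft_neg', neg_neg, Iso.hom_inv_id, Iso.inv_hom_id,
      Iso.hom_inv_id_assoc, Iso.inv_hom_id_assoc, mappingCone.inr_f_snd_v,
      mappingCone.inl_v_fst_v, mappingCone.inl_v_fst_v_assoc,
      shiftFunctorObjXIso, HomologicalComplex.XIsoOfEq_rfl, Iso.refl_inv, Iso.refl_hom,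
      ← MonoidalCategory.comp_whiskerRight_assoc, ← MonoidalCategory.whiskerLeft_comp_assoc]
    try rw [MonoidalCategory.id_whiskerRight, Category.id_comp]
    try rw [MonoidalCategory.whiskerLeft_id, Category.id_comp]
    rw [← Preadditive.add_comp, ← whiskerLeft_add']
    erw [Category.comp_id, Category.id_comp]
    erw [show (mappingCone.snd φ).v q q (add_zero q) ≫ (mappingCone.inr φ).f q +
        (mappingCone.fst φ).1.v q (q + 1) rfl ≫ (mappingCone.inl φ).v (q + 1) q (by omega) =
        𝟙 ((mappingCone φ).X q) from by
      rw [add_comm]; exact mappingCone.id_X φ q (q + 1) rfl]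
    rw [MonoidalCategory.whiskerLeft_id, Category.id_comp]
    exact (Category.comp_id _).symm

lemma iso₁ {A B : CochainComplex C ℤ} (Q : CochainComplex C ℤ) (φ : A ⟶ B)
    (h : Nonempty (Homotopy (𝟙 (mappingCone φ ⊗ Q)) 0)) :
    Nonempty ((HomotopyCategory.quotient C (ComplexShape.up ℤ)).obj (A ⊗ Q) ≅
      (HomotopyCategory.quotient C (ComplexShape.up ℤ)).obj (B ⊗ Q)) := by
  set T := trianglehOfDegreewiseSplit (shortComplex₁ Q φ) (splitting₁ Q φ) with hTdef
  have hT : T ∈ distTriang (HomotopyCategory C (ComplexShape.up ℤ)) :=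
    (HomotopyCategory.distinguished_iff_iso_trianglehOfDegreewiseSplit _).2
      ⟨_, _, ⟨Iso.refl _⟩⟩
  have hz : IsZero T.obj₂ := (HomotopyCategory.isZero_quotient_obj_iff _).2 h
  have : IsIso T.mor₃ := (Triangle.isZero₂_iff_isIso₃ _ hT).1 hz
  let e₁ : (HomotopyCategory.quotient C (ComplexShape.up ℤ)).obj ((A ⊗ Q)⟦(1 : ℤ)⟧) ≅
      (HomotopyCategory.quotient C (ComplexShape.up ℤ)).obj ((A⟦(1 : ℤ)⟧) ⊗ Q) :=
    (HomotopyCategory.quotient C (ComplexShape.up ℤ)).mapIso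
      (_root_.CochainComplex.mapBifunctorShift₁Iso A Q (curriedTensor C) 1).symm
  let e₂ := ((HomotopyCategory.quotient C (ComplexShape.up ℤ)).commShiftIso (1 : ℤ)).app (A ⊗ Q)
  exact ⟨(CategoryTheory.shiftFunctor (HomotopyCategory C (ComplexShape.up ℤ)) (1 : ℤ)).preimageIso
    (e₂.symm ≪≫ e₁ ≪≫ @asIso _ _ _ _ T.mor₃ this)⟩

lemma iso₂ (Q : CochainComplex C ℤ) {A B : CochainComplex C ℤ} (φ : A ⟶ B)
    (h : Nonempty (Homotopy (𝟙 (Q ⊗ mappingCone φ)) 0)) :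
    Nonempty ((HomotopyCategory.quotient C (ComplexShape.up ℤ)).obj (Q ⊗ A) ≅
      (HomotopyCategory.quotient C (ComplexShape.up ℤ)).obj (Q ⊗ B)) := by
  set T := trianglehOfDegreewiseSplit (shortComplex₂ Q φ) (splitting₂ Q φ) with hTdef
  have hT : T ∈ distTriang (HomotopyCategory C (ComplexShape.up ℤ)) :=
    (HomotopyCategory.distinguished_iff_iso_trianglehOfDegreewiseSplit _).2
      ⟨_, _, ⟨Iso.refl _⟩⟩
  have hz : IsZero T.obj₂ := (HomotopyCategory.isZero_quotient_obj_iff _).2 h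
  have : IsIso T.mor₃ := (Triangle.isZero₂_iff_isIso₃ _ hT).1 hz
  let e₁ : (HomotopyCategory.quotient C (ComplexShape.up ℤ)).obj ((Q ⊗ A)⟦(1 : ℤ)⟧) ≅
      (HomotopyCategory.quotient C (ComplexShape.up ℤ)).obj (Q ⊗ (A⟦(1 : ℤ)⟧)) :=
    (HomotopyCategory.quotient C (ComplexShape.up ℤ)).mapIso
      (_root_.CochainComplex.mapBifunctorShift₂Iso Q A (curriedTensor C) 1).symm
  let e₂ := ((HomotopyCategory.quotient C (ComplexShape.up ℤ)).commShiftIso (1 : ℤ)).app (Q ⊗ A)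
  exact ⟨(CategoryTheory.shiftFunctor (HomotopyCategory C (ComplexShape.up ℤ)) (1 : ℤ)).preimageIso
    (e₂.symm ≪≫ e₁ ≪≫ @asIso _ _ _ _ T.mor₃ this)⟩


end CategorifiedIdemAux

theorem categorified_idempotents_unique
    {C : Type*} [Category C] [MonoidalCategory C] [Preadditive C] [HasZeroObject C]
    [HasBinaryBiproducts C]
    [(curriedTensor C).Additive] [∀ (X₁ : C), ((curriedTensor C).obj X₁).Additive]
    [∀ (X₁ X₂ : GradedObject ℤ C), GradedObject.HasTensor X₁ X₂]
    [∀ X₁, PreservesColimit (Functor.empty.{0} C) ((curriedTensor C).obj X₁)]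
    [∀ X₂, PreservesColimit (Functor.empty.{0} C) ((curriedTensor C).flip.obj X₂)]
    [∀ (X₁ X₂ X₃ X₄ : GradedObject ℤ C), GradedObject.HasTensor₄ObjExt X₁ X₂ X₃ X₄]
    [∀ (X₁ X₂ X₃ : GradedObject ℤ C), GradedObject.HasGoodTensor₁₂Tensor X₁ X₂ X₃]
    [∀ (X₁ X₂ X₃ : GradedObject ℤ C), GradedObject.HasGoodTensorTensor₂₃ X₁ X₂ X₃]
    (P P' : CochainComplex C ℤ)
    (ι : 𝟙_ (CochainComplex C ℤ) ⟶ P) (ι' : 𝟙_ (CochainComplex C ℤ) ⟶ P')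
    (h₁ : Nonempty (Homotopy (𝟙 (P' ⊗ mappingCone ι)) 0))
    (h₂ : Nonempty (Homotopy (𝟙 (mappingCone ι' ⊗ P)) 0)) :
    Nonempty (HomotopyEquiv P P') := by
  obtain ⟨e₁⟩ := CategorifiedIdemAux.iso₁ P ι' h₂
  obtain ⟨e₂⟩ := CategorifiedIdemAux.iso₂ P' ι h₁
  exact ⟨HomotopyCategory.homotopyEquivOfIso
    (((HomotopyCategory.quotient C (ComplexShape.up ℤ)).mapIso (λ_ P)).symm ≪≫ e₁ ≪≫
      e₂.symm ≪≫ (HomotopyCategory.quotient C (ComplexShape.up ℤ)).mapIso (ρ_ P'))⟩
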